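/- If A is an invertible real (m+1)×(m+1) matrix satisfying ‖A‖ ≤ K·|det A|^{1/(m+1)}, then the largest singular value satisfies Λ(A) ≤ K^{m+1}·λ(A), where λ(A) and Λ(A) are the smallest and largest singular values of A. -/

import Mathlib

open scoped BigOperators

/-- `λ(A)`: the smallest singular value of `A` (square root of the minimum eigenvalue of
`AᵀA`; for real matrices `Aᴴ = Aᵀ`). -/
noncomputable def smallestSingularValue {m : ℕ} (A : Matrix (Fin (m + 1)) (Fin (m + 1)) ℝ) : ℝ :=
  Real.sqrt (⨅ i, (Matrix.isHermitian_conjTranspose_mul_self A).eigenvalues i)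

/-- `Λ(A)`: the largest singular value of `A` (square root of the maximum eigenvalue of
`AᵀA`). -/
noncomputable def largestSingularValue {m : ℕ} (A : Matrix (Fin (m + 1)) (Fin (m + 1)) ℝ) : ℝ :=
  Real.sqrt (⨆ i, (Matrix.isHermitian_conjTranspose_mul_self A).eigenvalues i)

/-- The Frobenius norm of a matrix. -/
noncomputable def frobeniusNorm {m : ℕ} (A : Matrix (Fin (m + 1)) (Fin (m + 1)) ℝ) : ℝ :=
  Real.sqrt (∑ i, ∑ j, (A i j) ^ 2)

lemma trace_eq_sum_eigenvalues' {n : Type*} [Fintype n] [DecidableEq n]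
    {A : Matrix n n ℝ} (hA : A.IsHermitian) :
    A.trace = ∑ i, hA.eigenvalues i := by
  simpa using hA.trace_eq_sum_eigenvalues


/-- If `A` is an invertible real `(m+1)×(m+1)` matrix with `‖A‖ ≤ K·|det A|^{1/(m+1)}`
(Frobenius norm, `K ≥ 1`), then `Λ(A) ≤ K^{m+1} · λ(A)`. -/
theorem largestSV_le_pow_succ_of_takahashi {m : ℕ} (A : Matrix (Fin (m + 1)) (Fin (m + 1)) ℝ)
    (hA : IsUnit A) (K : ℝ) (hK : 1 ≤ K)
    (hT : frobeniusNorm A ≤ K * |A.det| ^ ((1 : ℝ) / (m + 1))) :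
    largestSingularValue A ≤ K ^ (m + 1) * smallestSingularValue A := by
  unfold frobeniusNorm at hT
  unfold largestSingularValue smallestSingularValue
  classical
  set s := (Matrix.isHermitian_conjTranspose_mul_self A).eigenvalues with hs
  have hnn : ∀ i, 0 ≤ s i := fun i => Matrix.eigenvalues_conjTranspose_mul_self_nonneg A i
  have hdetne : A.det ≠ 0 := ((Matrix.isUnit_iff_isUnit_det A).mp hA).ne_zero
  have hprod : ∏ i, s i = A.det ^ 2 := by
    have h := (Matrix.isHermitian_conjTranspose_mul_self A).det_eq_prod_eigenvalues
    simp only [RCLike.ofReal_real_eq_id, id] at h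
    rw [← h, Matrix.det_mul, Matrix.det_conjTranspose, star_trivial, sq]
  have hpos : ∀ i, 0 < s i := by
    intro i
    rcases (hnn i).lt_or_eq with h | h
    · exact h
    · exfalso
      apply hdetne
      have : ∏ i, s i = 0 := Finset.prod_eq_zero (Finset.mem_univ i) h.symm
      rw [hprod] at this
      exact pow_eq_zero_iff (two_ne_zero) |>.mp this
  -- trace computation
  have htr : ∑ i, s i = ∑ i, ∑ j, (A i j) ^ 2 := by
    rw [← trace_eq_sum_eigenvalues' (Matrix.isHermitian_conjTranspose_mul_self A)]
    rw [Matrix.trace]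
    simp only [Matrix.diag_apply, Matrix.mul_apply, Matrix.conjTranspose_apply, star_trivial]
    rw [Finset.sum_comm]
    simp [sq]
  set S := ⨆ i, s i with hS
  set I := ⨅ i, s i with hI
  have hbddA : BddAbove (Set.range s) := Finite.bddAbove_range s
  have hbddB : BddBelow (Set.range s) := Finite.bddBelow_range s
  obtain ⟨i0, hi0⟩ := Finite.exists_min s
  have hImin : I = s i0 := le_antisymm (ciInf_le hbddB i0) (le_ciInf hi0)
  have hSpos : 0 < S := lt_of_lt_of_le (hpos i0) (le_ciSup hbddA i0)
  have hInn : 0 ≤ I := hImin ▸ (hnn i0)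
  -- S ≤ (K * d)^2
  have hF0 : (0:ℝ) ≤ ∑ i, ∑ j, (A i j) ^ 2 := by positivity
  have hFle : ∑ i, ∑ j, (A i j) ^ 2 ≤ (K * |A.det| ^ ((1 : ℝ) / (m + 1))) ^ 2 := by
    have := pow_le_pow_left₀ (Real.sqrt_nonneg _) hT 2
    rwa [Real.sq_sqrt hF0] at this
  have hSle : S ≤ (K * |A.det| ^ ((1 : ℝ) / (m + 1))) ^ 2 := by
    refine le_trans (ciSup_le fun i => ?_) (le_trans (le_of_eq htr) hFle)
    exact Finset.single_le_sum (fun j _ => hnn j) (Finset.mem_univ i)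
  -- raise to the (m+1)
  have hd : (|A.det| ^ ((1 : ℝ) / (m + 1))) ^ (2 * (m + 1)) = A.det ^ 2 := by
    rw [← Real.rpow_natCast (|A.det| ^ ((1 : ℝ) / (m + 1))) (2 * (m + 1)),
      ← Real.rpow_mul (abs_nonneg _)]
    have hm1 : ((m : ℝ) + 1) ≠ 0 := by positivity
    have : (1 : ℝ) / (m + 1) * ((2 * (m + 1) : ℕ) : ℝ) = 2 := by
      push_cast; field_simp
    rw [this, Real.rpow_two, sq_abs]
  have hpow : S ^ (m + 1) ≤ K ^ (2 * (m + 1)) * ∏ i, s i := by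
    calc S ^ (m + 1) ≤ ((K * |A.det| ^ ((1 : ℝ) / (m + 1))) ^ 2) ^ (m + 1) :=
          pow_le_pow_left₀ hSpos.le hSle (m + 1)
      _ = K ^ (2 * (m + 1)) * (|A.det| ^ ((1 : ℝ) / (m + 1))) ^ (2 * (m + 1)) := by
          ring
      _ = K ^ (2 * (m + 1)) * ∏ i, s i := by rw [hd, hprod]
  have hprodle : ∏ i, s i ≤ I * S ^ m := by
    rw [← Finset.mul_prod_erase Finset.univ s (Finset.mem_univ i0), hImin]
    have h1 : ∏ i ∈ Finset.univ.erase i0, s i ≤ ∏ _i ∈ Finset.univ.erase i0, S :=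
      Finset.prod_le_prod (fun i _ => hnn i) (fun i _ => le_ciSup hbddA i)
    have h2 : ∏ _i ∈ Finset.univ.erase i0, S = S ^ m := by
      rw [Finset.prod_const, Finset.card_erase_of_mem (Finset.mem_univ i0), Finset.card_univ]
      simp
    exact mul_le_mul_of_nonneg_left (h1.trans_eq h2) (hnn i0)
  have hfinal : S ≤ K ^ (2 * (m + 1)) * I := by
    have h : S * S ^ m ≤ (K ^ (2 * (m + 1)) * I) * S ^ m := by
      calc S * S ^ m = S ^ (m + 1) := (pow_succ' S m).symm
        _ ≤ K ^ (2 * (m + 1)) * ∏ i, s i := hpow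
        _ ≤ K ^ (2 * (m + 1)) * (I * S ^ m) :=
            mul_le_mul_of_nonneg_left hprodle (by positivity)
        _ = (K ^ (2 * (m + 1)) * I) * S ^ m := by ring
    exact le_of_mul_le_mul_right h (pow_pos hSpos m)
  have hK0 : (0:ℝ) ≤ K := le_trans zero_le_one hK
  calc Real.sqrt S ≤ Real.sqrt (K ^ (2 * (m + 1)) * I) := Real.sqrt_le_sqrt hfinal
    _ = K ^ (m + 1) * Real.sqrt I := by
        rw [Real.sqrt_mul (by positivity)]
        congr 1
        rw [show 2 * (m + 1) = (m + 1) * 2 by ring, pow_mul, Real.sqrt_sq (by positivity)]
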